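/- arXiv:2511.08198 — 3 statements merged into one kernel-verified Lean document; each statement's English description precedes it below -/
import Mathlib

section
/- Let A ∈ M_{m×n}(ℝ), l, u ∈ ℝⁿ with l ≤ u componentwise. If the system A·V = 0, l ≤ V ≤ u is infeasible, then there exists w ∈ ℝᵐ such that, setting c = Aᵀw, Σ_{cᵢ>0} cᵢ·u(xᵢ) + Σ_{cᵢ<0} cᵢ·l(xᵢ) < 0. (Completeness direction of the Farkas lemma variant.) -/
/-- Completeness direction of the Farkas lemma variant: if the system
    `A·V = 0, l ≤ V ≤ u` (with `l ≤ u`) is infeasible, then there exists a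
    Farkas certificate `w`. -/
theorem farkas_certificate_complete {m n : ℕ}
    (A : Matrix (Fin m) (Fin n) ℝ) (l u : Fin n → ℝ)
    (hlu : ∀ i, l i ≤ u i)
    (hinfeas : ¬ ∃ V : Fin n → ℝ,
      A.mulVec V = 0 ∧ (∀ i, l i ≤ V i) ∧ (∀ i, V i ≤ u i)) :
    ∃ w : Fin m → ℝ,
      (∑ i : Fin n,
        if 0 < (Matrix.vecMul w A) i then (Matrix.vecMul w A) i * u i
        else if (Matrix.vecMul w A) i < 0 then (Matrix.vecMul w A) i * l i
        else 0) < 0 := by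
  classical
  set K : Set (Fin m → ℝ) := A.mulVecLin '' Set.Icc l u with hK
  have hconv : Convex ℝ K := (convex_Icc l u).linear_image A.mulVecLin
  have hcomp : IsCompact K :=
    (isCompact_Icc).image A.mulVecLin.continuous_of_finiteDimensional
  have hclosed : IsClosed K := hcomp.isClosed
  have h0 : (0 : Fin m → ℝ) ∉ K := by
    rintro ⟨V, hV, hAV⟩
    exact hinfeas ⟨V, hAV, fun i => (hV.1 i), fun i => (hV.2 i)⟩
  obtain ⟨f, s, hfs, hs0⟩ := geometric_hahn_banach_closed_point hconv hclosed h0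
  have hs0' : s < 0 := by simpa using hs0
  set w : Fin m → ℝ := fun j => f (Pi.single j 1) with hw
  have hfw : ∀ x : Fin m → ℝ, f x = dotProduct w x := by
    intro x
    have hx : x = ∑ j : Fin m, x j • (Pi.single j 1 : Fin m → ℝ) := by
      ext k
      simp [Pi.single_apply, Finset.sum_apply, mul_comm]
    calc f x = f (∑ j : Fin m, x j • (Pi.single j 1 : Fin m → ℝ)) := by rw [← hx]
      _ = ∑ j : Fin m, x j * f (Pi.single j 1) := by
          rw [map_sum]; simp [smul_eq_mul]
      _ = dotProduct w x := by simp [dotProduct, hw, mul_comm]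
  refine ⟨w, ?_⟩
  set c : Fin n → ℝ := Matrix.vecMul w A with hc
  set V : Fin n → ℝ := fun i => if 0 < c i then u i else l i with hV
  have hVmem : V ∈ Set.Icc l u := by
    constructor <;> intro i <;> simp only [hV] <;> split <;>
      first | exact le_rfl | exact hlu i
  have hsum : (∑ i : Fin n,
      if 0 < c i then c i * u i else if c i < 0 then c i * l i else 0)
      = dotProduct c V := by
    apply Finset.sum_congr rfl
    intro i _
    simp only [dotProduct, hV]
    by_cases h1 : 0 < c i
    · simp [h1]
    · by_cases h2 : c i < 0
      · simp [h1, h2]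
      · have : c i = 0 := le_antisymm (not_lt.1 h1) (not_lt.1 h2)
        simp [h1, h2, this]
  rw [hsum]
  have hdot : dotProduct c V = f (A.mulVec V) := by
    rw [hfw, Matrix.dotProduct_mulVec, hc]
  rw [hdot]
  have : f (A.mulVec V) < s := hfs _ ⟨V, hVmem, rfl⟩
  linarith
end

section
/- Let c ∈ ℝⁿ, bound vectors l_input ≤ l ≤ u ≤ u_input, and suppose Δ = Σ_{cᵢ>0} cᵢ·u(xᵢ) + Σ_{cᵢ<0} cᵢ·l(xᵢ) < 0. Let S ⊆ {1,…,n} be a set of indices such that Σ_{i∈S} |cont(i)| ≤ |Δ|, where cont(i) is the (nonpositive) contribution of index i. Then replacing, for each i ∈ S, the tightened bound by the input bound (i.e., using u_input(xᵢ) in place of u(xᵢ) if cᵢ > 0, and l_input(xᵢ) in place of l(xᵢ) if cᵢ < 0) yields a value Δ' ≤ 0; moreover Δ' < 0 if the inequality Σ_{i∈S} |cont(i)| ≤ |Δ| is strict. -/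
/-- Relaxing, for indices in `S`, the tightened bounds back to the input bounds
    keeps the certificate value nonpositive provided the total removed
    contribution fits within the slack `|Δ|`; strictly negative if the fit is
    strict. -/
theorem relax_bounds_preserves_certificate {n : ℕ}
    (c linput l u uinput : Fin n → ℝ)
    (h1 : ∀ i, linput i ≤ l i) (h2 : ∀ i, l i ≤ u i)
    (h3 : ∀ i, u i ≤ uinput i)
    (hΔ : (∑ i : Fin n,
        if 0 < c i then c i * u i
        else if c i < 0 then c i * l i
        else 0) < 0)
    (S : Finset (Fin n))
    (hS : (∑ i ∈ S,
        |if 0 < c i then c i * (u i - uinput i)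
         else if c i < 0 then c i * (linput i - l i)
         else 0|) ≤
      |∑ i : Fin n,
        if 0 < c i then c i * u i
        else if c i < 0 then c i * l i
        else 0|) :
    ((∑ i : Fin n,
        if 0 < c i then c i * (if i ∈ S then uinput i else u i)
        else if c i < 0 then c i * (if i ∈ S then linput i else l i)
        else 0) ≤ 0) ∧
    (((∑ i ∈ S,
        |if 0 < c i then c i * (u i - uinput i)
         else if c i < 0 then c i * (linput i - l i)
         else 0|) <
      |∑ i : Fin n,
        if 0 < c i then c i * u i
        else if c i < 0 then c i * l i
        else 0|) →
      (∑ i : Fin n,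
        if 0 < c i then c i * (if i ∈ S then uinput i else u i)
        else if c i < 0 then c i * (if i ∈ S then linput i else l i)
        else 0) < 0) := by

  have key : ∀ i : Fin n,
      (if 0 < c i then c i * (if i ∈ S then uinput i else u i)
        else if c i < 0 then c i * (if i ∈ S then linput i else l i) else 0)
      = (if 0 < c i then c i * u i else if c i < 0 then c i * l i else 0)
        + (if i ∈ S then
            |if 0 < c i then c i * (u i - uinput i)
             else if c i < 0 then c i * (linput i - l i) else 0| else 0) := by
    intro i
    by_cases hiS : i ∈ S
    · rcases lt_trichotomy (c i) 0 with hc | hc | hc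
      · have hnn : 0 ≤ c i * (linput i - l i) :=
          by nlinarith [h1 i]
        simp [hiS, hc, hc.not_gt, abs_of_nonneg hnn]
        ring
      · simp [hiS, hc]
      · have hnn : 0 ≤ c i * (uinput i - u i) :=
          mul_nonneg hc.le (by linarith [h3 i])
        have : |c i * (u i - uinput i)| = c i * (uinput i - u i) := by
          rw [abs_of_nonpos (by nlinarith)]; ring
        simp [hiS, hc, this]
        ring
    · simp [hiS]
  have hsum : (∑ i : Fin n,
      if 0 < c i then c i * (if i ∈ S then uinput i else u i)
      else if c i < 0 then c i * (if i ∈ S then linput i else l i) else 0)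
      = (∑ i : Fin n, if 0 < c i then c i * u i else if c i < 0 then c i * l i else 0)
        + ∑ i ∈ S,
            |if 0 < c i then c i * (u i - uinput i)
             else if c i < 0 then c i * (linput i - l i) else 0| := by
    rw [Finset.sum_congr rfl (fun i _ => key i), Finset.sum_add_distrib]
    congr 1
    rw [← Finset.sum_filter]
    congr 1
    simp
  have habs : |∑ i : Fin n,
      if 0 < c i then c i * u i else if c i < 0 then c i * l i else 0|
      = -(∑ i : Fin n,
      if 0 < c i then c i * u i else if c i < 0 then c i * l i else 0) :=
    abs_of_neg hΔ
  rw [habs] at hS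
  constructor
  · rw [hsum]; linarith
  · intro hlt
    rw [habs] at hlt
    rw [hsum]; linarith
end

section
/- Exchange lemma: let δ : I → ℝ≥0 be weights on a finite index set, B ≥ 0, and let D, D' ⊆ I be two subsets with Σ_{i∉D} δᵢ ≤ B and Σ_{i∉D'} δᵢ ≤ B (i.e., both complements are removable within the budget). Suppose ℓ ∈ D \ D' attains the minimal weight in D \ D' and ℓ' ∈ D' \ D attains the minimal weight in D' \ D, and δ_{ℓ'} ≤ δ_ℓ. Then the set D'' = (D' \ {ℓ'}) ∪ {ℓ} also satisfies Σ_{i∉D''} δᵢ ≤ B and |D''| = |D'|. -/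
/-- Exchange lemma: swapping the minimal-weight kept element `ℓ'` of `D' \ D`
    for the minimal-weight kept element `ℓ` of `D \ D'`, of no smaller weight,
    preserves feasibility (complement removable within the budget) and
    cardinality. -/
theorem exchange_lemma {ι : Type*} [DecidableEq ι]
    (I : Finset ι) (δ : ι → ℝ) (B : ℝ)
    (hnonneg : ∀ i ∈ I, 0 ≤ δ i) (hB : 0 ≤ B)
    (D D' : Finset ι) (hD : D ⊆ I) (hD' : D' ⊆ I)
    (hfeasD : (∑ i ∈ I \ D, δ i) ≤ B)
    (hfeasD' : (∑ i ∈ I \ D', δ i) ≤ B)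
    (ℓ ℓ' : ι)
    (hℓ : ℓ ∈ D \ D') (hℓmin : ∀ i ∈ D \ D', δ ℓ ≤ δ i)
    (hℓ' : ℓ' ∈ D' \ D) (hℓ'min : ∀ i ∈ D' \ D, δ ℓ' ≤ δ i)
    (hle : δ ℓ' ≤ δ ℓ) :
    (∑ i ∈ I \ (insert ℓ (D'.erase ℓ')), δ i) ≤ B ∧
      (insert ℓ (D'.erase ℓ')).card = D'.card := by
  have hℓD : ℓ ∈ D := (Finset.mem_sdiff.mp hℓ).1
  have hℓnD' : ℓ ∉ D' := (Finset.mem_sdiff.mp hℓ).2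
  have hℓ'D' : ℓ' ∈ D' := (Finset.mem_sdiff.mp hℓ').1
  have hℓ'nD : ℓ' ∉ D := (Finset.mem_sdiff.mp hℓ').2
  have hne : ℓ ≠ ℓ' := fun h => hℓ'nD (h ▸ hℓD)
  have hℓI : ℓ ∈ I := hD hℓD
  have hℓ'I : ℓ' ∈ I := hD' hℓ'D'
  have hset : I \ (insert ℓ (D'.erase ℓ')) = insert ℓ' ((I \ D').erase ℓ) := by
    ext x
    simp only [Finset.mem_sdiff, Finset.mem_insert, Finset.mem_erase]
    by_cases h : x = ℓ' <;> by_cases h2 : x = ℓ <;>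
      subst_vars <;> simp_all <;> tauto
  have hℓmem : ℓ ∈ I \ D' := Finset.mem_sdiff.mpr ⟨hℓI, hℓnD'⟩
  have hℓ'notin : ℓ' ∉ (I \ D').erase ℓ := by
    simp [Finset.mem_erase, Finset.mem_sdiff, hℓ'D']
  constructor
  · rw [hset, Finset.sum_insert hℓ'notin,
      Finset.sum_erase_eq_sub hℓmem]
    linarith
  · rw [Finset.card_insert_of_notMem (by simp [Finset.mem_erase, hℓnD']),
      Finset.card_erase_of_mem hℓ'D']
    have : 1 ≤ D'.card := Finset.card_pos.mpr ⟨ℓ', hℓ'D'⟩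
    omega
end
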